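/- Let d ≥ 1, M ≥ 2, let p, p_1, …, p_M ∈ ℝ^d with p ≠ p_m for all m, and let c > 0. Define τ_m = ‖p − p_m‖₂/c, the delay-gradient vectors g_i ∈ ℝ^M by [g_i]_m = (p_i − [p_m]_i)/(c‖p − p_m‖₂), the centering projection P = I_M − (1/M)𝟙𝟙ᵀ, the geometry matrix G ∈ ℝ^{d×d} by G_{ij} = (P g_i)ᵀ(P g_j), and for f ∈ ℝ the steering vector v(f) ∈ ℂ^M with [v(f)]_m = exp(−2πℹ f τ_m). Fix 0 < f_L < f_H, S_L > S_H > 0, N₀ > 0, and a water level λ with 0 < λ < S_H + N₀. For b ∈ {L, H} set the rate–distortion water-filling gains B_b = 1 − λ/(S_b + N₀), the effective noise levels S_{w,b} = B_b² N₀ + λ B_b, effective SNRs γ_b = S_b B_b²/S_{w,b}, and band weights w_b = 2Mγ_b²/(1 + Mγ_b). For |f| ≤ f_L let S(f) = S_L B_L² v(f)v(f)* + S_{w,L} I_M and S'_i(f) = 2πℹ f S_L B_L² (v(f)v(f)* D_i − D_i v(f)v(f)*), and for f_L < |f| ≤ f_H let S(f) = S_H B_H² v(f)v(f)* + S_{w,H}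 I_M and S'_i(f) = 2πℹ f S_H B_H² (v(f)v(f)* D_i − D_i v(f)v(f)*), where D_i = diag(g_i). Then for all 1 ≤ i, j ≤ d: (1/2)∫_{−f_H}^{f_H} tr(S(f)^{-1} S'_i(f) S(f)^{-1} S'_j(f)) df = (4π²/3)·(f_L³ w_L + (f_H³ − f_L³) w_H)·G_{ij}. -/

import Mathlib

open Matrix Real MeasureTheory

section WhittleHelpers

variable {M : ℕ}

lemma my_vvXvv (v w : Fin M → ℂ) (X : Matrix (Fin M) (Fin M) ℂ) :
    vecMulVec v w * X * vecMulVec v w = (w ⬝ᵥ X.mulVec v) • vecMulVec v w := by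
  ext m n
  simp only [mul_apply, vecMulVec_apply, Matrix.smul_apply, dotProduct, mulVec, smul_eq_mul,
    Finset.sum_mul, Finset.mul_sum]
  rw [Finset.sum_comm]
  exact Finset.sum_congr rfl fun k _ => Finset.sum_congr rfl fun l _ => by ring

lemma my_trace_vv_mul (v w : Fin M → ℂ) (X : Matrix (Fin M) (Fin M) ℂ) :
    Matrix.trace (vecMulVec v w * X) = w ⬝ᵥ X.mulVec v := by
  simp only [Matrix.trace, diag_apply, mul_apply, vecMulVec_apply, dotProduct, mulVec,
    smul_eq_mul, Finset.mul_sum]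
  rw [Finset.sum_comm]
  exact Finset.sum_congr rfl fun k _ => Finset.sum_congr rfl fun l _ => by ring

lemma my_vvvv (v w : Fin M → ℂ) :
    vecMulVec v w * vecMulVec v w = (w ⬝ᵥ v) • vecMulVec v w := by
  have := my_vvXvv v w 1
  simpa [Matrix.mul_one, Matrix.one_mulVec] using this

lemma my_trace_vv (v w : Fin M → ℂ) : Matrix.trace (vecMulVec v w) = w ⬝ᵥ v := by
  have := my_trace_vv_mul v w 1
  simpa [Matrix.mul_one, Matrix.one_mulVec] using this

lemma core_trace (v w : Fin M → ℂ) (X Y : Matrix (Fin M) (Fin M) ℂ) (β m χ ψ φ φ' : ℂ)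
    (hm : w ⬝ᵥ v = m)
    (hχ : w ⬝ᵥ X.mulVec v = χ) (hψ : w ⬝ᵥ Y.mulVec v = ψ)
    (hφ : w ⬝ᵥ (X * Y).mulVec v = φ) (hφ' : w ⬝ᵥ (Y * X).mulVec v = φ') :
    Matrix.trace ((1 - β • vecMulVec v w) * (vecMulVec v w * X - X * vecMulVec v w) *
      ((1 - β • vecMulVec v w) * (vecMulVec v w * Y - Y * vecMulVec v w)))
    = (1 - β * m) * (2 * χ * ψ - m * (φ + φ')) := by
  set A := vecMulVec v w with hA
  have hAA : A * A = m • A := by rw [hA, my_vvvv, hm]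
  have hAXA : A * X * A = χ • A := by rw [hA, my_vvXvv, hχ]
  have hAYA : A * Y * A = ψ • A := by rw [hA, my_vvXvv, hψ]
  have htrA : Matrix.trace A = m := by rw [hA, my_trace_vv, hm]
  have htAX : Matrix.trace (A * X) = χ := by rw [hA, my_trace_vv_mul, hχ]
  have htAY : Matrix.trace (A * Y) = ψ := by rw [hA, my_trace_vv_mul, hψ]
  have hP : (1 - β • A) * (A * X - X * A) = (1 - β * m) • (A * X) - X * A + (β * χ) • A := by
    have e1 : A * (A * X) = m • (A * X) := by rw [← mul_assoc, hAA, smul_mul_assoc]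
    have e2 : A * (X * A) = χ • A := by rw [← mul_assoc, hAXA]
    rw [sub_mul, one_mul, smul_mul_assoc, mul_sub, e1, e2]
    module
  have hQ : (1 - β • A) * (A * Y - Y * A) = (1 - β * m) • (A * Y) - Y * A + (β * ψ) • A := by
    have e1 : A * (A * Y) = m • (A * Y) := by rw [← mul_assoc, hAA, smul_mul_assoc]
    have e2 : A * (Y * A) = ψ • A := by rw [← mul_assoc, hAYA]
    rw [sub_mul, one_mul, smul_mul_assoc, mul_sub, e1, e2]
    module
  rw [hP, hQ]
  have t1 : Matrix.trace (A * X * (A * Y)) = χ * ψ := by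
    rw [show A * X * (A * Y) = A * X * A * Y by noncomm_ring, hAXA, smul_mul_assoc,
      trace_smul, htAY, smul_eq_mul]
  have t2 : Matrix.trace (A * X * (Y * A)) = φ * m := by
    rw [show A * X * (Y * A) = A * (X * Y) * A by noncomm_ring, hA, my_vvXvv, hφ,
      trace_smul, ← hA, htrA, smul_eq_mul]
  have t3 : Matrix.trace (A * X * A) = χ * m := by
    rw [hAXA, trace_smul, htrA, smul_eq_mul]
  have t4 : Matrix.trace (X * A * (A * Y)) = m * φ' := by
    have h4 : X * A * (A * Y) = m • (X * (A * Y)) := by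
      rw [show X * A * (A * Y) = X * (A * A) * Y by noncomm_ring, hAA, mul_smul_comm,
        smul_mul_assoc, mul_assoc]
    rw [h4, trace_smul, smul_eq_mul, trace_mul_comm, mul_assoc, hA, my_trace_vv_mul, hφ']
  have t5 : Matrix.trace (X * A * (Y * A)) = ψ * χ := by
    rw [show X * A * (Y * A) = X * (A * Y * A) by noncomm_ring, hAYA, mul_smul_comm,
      trace_smul, smul_eq_mul, trace_mul_comm, htAX]
  have t6 : Matrix.trace (X * A * A) = m * χ := by
    rw [mul_assoc, hAA, mul_smul_comm, trace_smul, smul_eq_mul, trace_mul_comm, htAX]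
  have t7 : Matrix.trace (A * (A * Y)) = m * ψ := by
    rw [← mul_assoc, hAA, smul_mul_assoc, trace_smul, smul_eq_mul, htAY]
  have t8 : Matrix.trace (A * (Y * A)) = ψ * m := by
    rw [← mul_assoc, hAYA, trace_smul, smul_eq_mul, htrA]
  have t9 : Matrix.trace (A * A) = m * m := by
    rw [hAA, trace_smul, smul_eq_mul, htrA]
  simp only [sub_mul, add_mul, mul_sub, mul_add, smul_mul_assoc, mul_smul_comm, smul_smul,
    trace_add, trace_sub, trace_smul, smul_eq_mul]
  rw [t1, t2, t3, t4, t5, t6, t7, t8, t9]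
  ring

lemma my_inv (v w : Fin M → ℂ) (a s m : ℂ) (hm : w ⬝ᵥ v = m)
    (hs : s ≠ 0) (hden : a * m + s ≠ 0) :
    (a • vecMulVec v w + s • (1 : Matrix (Fin M) (Fin M) ℂ))⁻¹
      = s⁻¹ • (1 - (a / (a * m + s)) • vecMulVec v w) := by
  apply Matrix.inv_eq_right_inv
  set A := vecMulVec v w with hA
  have hAA : A * A = m • A := by rw [hA, my_vvvv, hm]
  set β := a / (a * m + s) with hβ
  have key : (a • A + s • (1 : Matrix (Fin M) (Fin M) ℂ)) * (s⁻¹ • (1 - β • A))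
      = (s⁻¹ * (a - β * (a * m) - β * s)) • A + (s⁻¹ * s) • (1 : Matrix (Fin M) (Fin M) ℂ) := by
    simp only [smul_mul_assoc, mul_smul_comm, mul_sub, sub_mul, add_mul, Matrix.mul_one,
      Matrix.one_mul, hAA, smul_smul, smul_sub, smul_add]
    module
  rw [key, show a - β * (a * m) - β * s = 0 by rw [hβ]; field_simp; ring,
    inv_mul_cancel₀ hs, mul_zero, zero_smul, zero_add, one_smul]

lemma band_trace (v w : Fin M → ℂ) (X Y : Matrix (Fin M) (Fin M) ℂ) (a s : ℂ)
    (κ χ ψ φ : ℂ) (hm : w ⬝ᵥ v = (M : ℂ))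
    (hχ : w ⬝ᵥ X.mulVec v = χ) (hψ : w ⬝ᵥ Y.mulVec v = ψ)
    (hφ : w ⬝ᵥ (X * Y).mulVec v = φ) (hφ' : w ⬝ᵥ (Y * X).mulVec v = φ)
    (hs : s ≠ 0) (hden : a * M + s ≠ 0) :
    Matrix.trace ((a • vecMulVec v w + s • (1 : Matrix (Fin M) (Fin M) ℂ))⁻¹ *
        (κ • (vecMulVec v w * X - X * vecMulVec v w)) *
        (a • vecMulVec v w + s • (1 : Matrix (Fin M) (Fin M) ℂ))⁻¹ *
        (κ • (vecMulVec v w * Y - Y * vecMulVec v w)))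
      = κ ^ 2 * (2 / (s * (a * M + s))) * (χ * ψ - M * φ) := by
  rw [my_inv v w a s (M : ℂ) hm hs hden]
  set A := vecMulVec v w with hA
  set β := a / (a * (M : ℂ) + s) with hβ
  rw [mul_assoc (s⁻¹ • (1 - β • A) * (κ • (A * X - X * A)))]
  rw [show s⁻¹ • (1 - β • A) * (κ • (A * X - X * A)) *
      (s⁻¹ • (1 - β • A) * (κ • (A * Y - Y * A)))
    = (s⁻¹ * κ * (s⁻¹ * κ)) • ((1 - β • A) * (A * X - X * A) *
        ((1 - β • A) * (A * Y - Y * A))) by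
    simp only [smul_mul_assoc, mul_smul_comm, smul_smul]; ring_nf]
  rw [trace_smul, smul_eq_mul, core_trace v w X Y β (M : ℂ) χ ψ φ φ hm hχ hψ hφ hφ']
  rw [hβ]
  field_simp
  ring

lemma band_value (v : Fin M → ℂ) (hv : ∀ m, star (v m) * v m = 1)
    (gi gj : Fin M → ℝ) (a s wb Gij f : ℝ) (κ : ℂ)
    (hκ : κ = 2 * (π : ℂ) * Complex.I * (f : ℂ) * (a : ℂ))
    (hs : 0 < s) (ha : 0 < a)
    (hgeo : (M : ℝ) * (∑ m, gi m * gj m) = (∑ m, gi m) * (∑ m, gj m) + M * Gij)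
    (hwb : wb * (s * (a * M + s)) = 2 * M * a ^ 2) :
    Matrix.trace (((a : ℂ) • vecMulVec v (star v) + (s : ℂ) • (1 : Matrix (Fin M) (Fin M) ℂ))⁻¹ *
        (κ • (vecMulVec v (star v) * Matrix.diagonal (fun m => (gi m : ℂ))
           - Matrix.diagonal (fun m => (gi m : ℂ)) * vecMulVec v (star v))) *
        ((a : ℂ) • vecMulVec v (star v) + (s : ℂ) • (1 : Matrix (Fin M) (Fin M) ℂ))⁻¹ *
        (κ • (vecMulVec v (star v) * Matrix.diagonal (fun m => (gj m : ℂ))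
           - Matrix.diagonal (fun m => (gj m : ℂ)) * vecMulVec v (star v))))
      = ((4 * π ^ 2 * wb * Gij * f ^ 2 : ℝ) : ℂ) := by
  set si : ℝ := ∑ m, gi m with hsi
  set sj : ℝ := ∑ m, gj m with hsj
  set q : ℝ := ∑ m, gi m * gj m with hq
  have hm : star v ⬝ᵥ v = (M : ℂ) := by
    simp only [dotProduct, Pi.star_apply, hv]
    simp
  have hdot : ∀ (u1 : Fin M → ℝ),
      star v ⬝ᵥ (Matrix.diagonal (fun m => (u1 m : ℂ))) *ᵥ v = ((∑ m, u1 m : ℝ) : ℂ) := by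
    intro u1
    simp only [dotProduct, mulVec_diagonal, Pi.star_apply]
    push_cast
    refine Finset.sum_congr rfl fun m _ => ?_
    rw [show star (v m) * ((u1 m : ℂ) * v m) = (u1 m : ℂ) * (star (v m) * v m) by ring, hv,
      mul_one]
  have hχ := hdot gi
  have hψ := hdot gj
  have hφ : star v ⬝ᵥ ((Matrix.diagonal (fun m => (gi m : ℂ))) *
      (Matrix.diagonal (fun m => (gj m : ℂ)))) *ᵥ v = ((q : ℝ) : ℂ) := by
    rw [Matrix.diagonal_mul_diagonal]
    have := hdot (fun m => gi m * gj m)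
    rw [show (fun m => ((gi m * gj m : ℝ) : ℂ)) = (fun m => (gi m : ℂ) * (gj m : ℂ)) by
      funext m; push_cast; ring] at this
    exact this
  have hφ' : star v ⬝ᵥ ((Matrix.diagonal (fun m => (gj m : ℂ))) *
      (Matrix.diagonal (fun m => (gi m : ℂ)))) *ᵥ v = ((q : ℝ) : ℂ) := by
    rw [Matrix.diagonal_mul_diagonal]
    have := hdot (fun m => gj m * gi m)
    rw [show (fun m => ((gj m * gi m : ℝ) : ℂ)) = (fun m => (gj m : ℂ) * (gi m : ℂ)) by
      funext m; push_cast; ring] at this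
    rw [this, hq]
    norm_cast
    exact Finset.sum_congr rfl fun m _ => mul_comm _ _
  have hX0 : s * (a * M + s) ≠ 0 := by positivity
  have hs' : ((s : ℝ) : ℂ) ≠ 0 := by exact_mod_cast hs.ne'
  have hden : (a : ℂ) * (M : ℂ) + (s : ℂ) ≠ 0 := by
    have h0 : (0:ℝ) < a * M + s := by positivity
    have h1 : ((a * M + s : ℝ) : ℂ) ≠ 0 := by exact_mod_cast h0.ne'
    convert h1 using 2 <;> (push_cast; ring)
  rw [band_trace v (star v) _ _ ((a:ℝ):ℂ) ((s:ℝ):ℂ) κ ((si:ℝ):ℂ) ((sj:ℝ):ℂ) ((q:ℝ):ℂ)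
    hm hχ hψ hφ hφ' hs' hden]
  rw [hκ]
  have e2 : (2 * (π:ℂ) * Complex.I * (f:ℂ) * (a:ℂ)) ^ 2 = -(((2*π*f*a)^2 : ℝ) : ℂ) := by
    rw [show (2*(π:ℂ)*Complex.I*(f:ℂ)*(a:ℂ))^2 = Complex.I^2 * (2*(π:ℂ)*(f:ℂ)*(a:ℂ))^2 by ring,
      Complex.I_sq]
    push_cast; ring
  have e3 : ((s:ℂ) * ((a:ℂ) * (M:ℂ) + (s:ℂ))) = ((s * (a * M + s) : ℝ) : ℂ) := by
    push_cast; ring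
  have hr : si * sj - (M:ℝ) * q = -(M * Gij) := by linarith
  have e4 : ((si:ℝ):ℂ) * ((sj:ℝ):ℂ) - (M:ℂ) * ((q:ℝ):ℂ) = ((-(M * Gij) : ℝ) : ℂ) := by
    rw [← hr]; push_cast; ring
  rw [e2, e3, e4, show (2:ℂ) / ((s * (a * M + s) : ℝ):ℂ) = (((2 / (s * (a*M+s)) : ℝ)):ℂ) by
    push_cast; ring]
  rw [show (-(((2*π*f*a)^2 : ℝ):ℂ)) * (((2 / (s * (a*M+s)) : ℝ)):ℂ) * ((-(M * Gij) : ℝ):ℂ)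
    = (((2*π*f*a)^2 * (2 / (s * (a*M+s))) * (M * Gij) : ℝ) : ℂ) by push_cast; ring]
  norm_cast
  rw [show wb = 2 * M * a ^ 2 / (s * (a * M + s)) by rw [eq_div_iff hX0]; exact hwb]
  ring

lemma my_geo (hM : (M:ℝ) ≠ 0) (gi gj : Fin M → ℝ) (Gij : ℝ)
    (hGij : Gij = ((1 : Matrix (Fin M) (Fin M) ℝ) - (M:ℝ)⁻¹ • vecMulVec 1 1).mulVec gi ⬝ᵥ
      ((1 : Matrix (Fin M) (Fin M) ℝ) - (M:ℝ)⁻¹ • vecMulVec 1 1).mulVec gj) :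
    (M : ℝ) * (∑ m, gi m * gj m) = (∑ m, gi m) * (∑ m, gj m) + M * Gij := by
  have hPg : ∀ u : Fin M → ℝ,
      ((1 : Matrix (Fin M) (Fin M) ℝ) - (M:ℝ)⁻¹ • vecMulVec 1 1).mulVec u
      = fun m => u m - (M:ℝ)⁻¹ * ∑ k, u k := by
    intro u; funext m
    simp [mulVec, dotProduct, vecMulVec_apply, Matrix.sub_apply, Matrix.smul_apply,
      sub_mul, Finset.sum_sub_distrib, Matrix.one_apply, Finset.sum_ite_eq,
      ← Finset.mul_sum, smul_eq_mul]
  rw [hGij, hPg, hPg]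
  simp only [dotProduct]
  set ci := (M:ℝ)⁻¹ * ∑ k, gi k with hci
  set cj := (M:ℝ)⁻¹ * ∑ k, gj k with hcj
  rw [show (∑ m, (gi m - ci) * (gj m - cj))
      = ∑ m, (gi m * gj m - cj * gi m - ci * gj m + ci * cj) from
    Finset.sum_congr rfl (fun m _ => by ring)]
  rw [Finset.sum_add_distrib, Finset.sum_sub_distrib, Finset.sum_sub_distrib,
    ← Finset.mul_sum, ← Finset.mul_sum, Finset.sum_const, Finset.card_univ,
    Fintype.card_fin, nsmul_eq_mul]
  rw [hci, hcj]
  field_simp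
  ring

end WhittleHelpers

/-- **High-rate regime of Theorem 1**: under RD water-filling gains
`B_b = 1 − λ/(S_b + N₀)` with `0 < λ < S_H + N₀` (both bands active), the
Whittle Fisher-information rate equals `(4π²/3)(f_L³ w_L + (f_H³ − f_L³) w_H) G_{ij}`. -/
theorem two_band_whittle_FI_rate_highrate
    (d M : ℕ) (hd : 1 ≤ d) (hM : 2 ≤ M)
    (p : EuclideanSpace ℝ (Fin d)) (ps : Fin M → EuclideanSpace ℝ (Fin d))
    (hps : ∀ m, p ≠ ps m) (c : ℝ) (hc : 0 < c)
    (τ : Fin M → ℝ) (hτ : ∀ m, τ m = ‖p - ps m‖ / c)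
    (g : Fin d → Fin M → ℝ)
    (hg : ∀ i m, g i m = (p i - ps m i) / (c * ‖p - ps m‖))
    (P : Matrix (Fin M) (Fin M) ℝ)
    (hP : P = (1 : Matrix (Fin M) (Fin M) ℝ) - ((M : ℝ))⁻¹ • vecMulVec 1 1)
    (G : Fin d → Fin d → ℝ)
    (hG : ∀ i j, G i j = P.mulVec (g i) ⬝ᵥ P.mulVec (g j))
    (v : ℝ → Fin M → ℂ)
    (hv : ∀ f m, v f m = Complex.exp (-(2 * π * Complex.I * f * τ m)))
    (fL fH SL SH N0 lam : ℝ)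
    (hfL : 0 < fL) (hfLH : fL < fH)
    (hSH : 0 < SH) (hSLH : SH < SL) (hN0 : 0 < N0)
    (hlam0 : 0 < lam) (hlamH : lam < SH + N0)
    (BL BH : ℝ)
    (hBL : BL = 1 - lam / (SL + N0)) (hBH : BH = 1 - lam / (SH + N0))
    (SwL SwH : ℝ)
    (hSwL : SwL = BL ^ 2 * N0 + lam * BL)
    (hSwH : SwH = BH ^ 2 * N0 + lam * BH)
    (γL γH : ℝ) (hγL : γL = SL * BL ^ 2 / SwL) (hγH : γH = SH * BH ^ 2 / SwH)
    (wL wH : ℝ)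
    (hwL : wL = 2 * M * γL ^ 2 / (1 + M * γL))
    (hwH : wH = 2 * M * γH ^ 2 / (1 + M * γH))
    (D : Fin d → Matrix (Fin M) (Fin M) ℂ)
    (hD : ∀ i, D i = Matrix.diagonal fun m => (g i m : ℂ))
    (S : ℝ → Matrix (Fin M) (Fin M) ℂ)
    (S' : Fin d → ℝ → Matrix (Fin M) (Fin M) ℂ)
    (hSlow : ∀ f : ℝ, |f| ≤ fL →
      S f = ((SL * BL ^ 2 : ℝ) : ℂ) • vecMulVec (v f) (star (v f))
        + ((SwL : ℝ) : ℂ) • (1 : Matrix (Fin M) (Fin M) ℂ))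
    (hShigh : ∀ f : ℝ, fL < |f| → |f| ≤ fH →
      S f = ((SH * BH ^ 2 : ℝ) : ℂ) • vecMulVec (v f) (star (v f))
        + ((SwH : ℝ) : ℂ) • (1 : Matrix (Fin M) (Fin M) ℂ))
    (hS'low : ∀ (i : Fin d) (f : ℝ), |f| ≤ fL →
      S' i f = (2 * π * Complex.I * f * (SL * BL ^ 2)) •
        (vecMulVec (v f) (star (v f)) * D i - D i * vecMulVec (v f) (star (v f))))
    (hS'high : ∀ (i : Fin d) (f : ℝ), fL < |f| → |f| ≤ fH →
      S' i f = (2 * π * Complex.I * f * (SH * BH ^ 2)) •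
        (vecMulVec (v f) (star (v f)) * D i - D i * vecMulVec (v f) (star (v f)))) :
    ∀ i j : Fin d,
      (1 / 2 : ℂ) * ∫ f in (-fH)..fH,
          Matrix.trace ((S f)⁻¹ * S' i f * (S f)⁻¹ * S' j f)
        = (((4 * π ^ 2 / 3) * (fL ^ 3 * wL + (fH ^ 3 - fL ^ 3) * wH) * G i j : ℝ) : ℂ) := by
  intro i j
  -- positivity facts
  have hM0 : (0:ℝ) < M := by exact_mod_cast Nat.pos_of_ne_zero (by omega)
  have hMne : (M:ℝ) ≠ 0 := hM0.ne'
  have hBLpos : 0 < BL := by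
    rw [hBL]
    have h1 : lam / (SL + N0) < 1 := (div_lt_one (by linarith)).mpr (by linarith)
    linarith
  have hBHpos : 0 < BH := by
    rw [hBH]
    have h1 : lam / (SH + N0) < 1 := (div_lt_one (by linarith)).mpr (by linarith)
    linarith
  have hsL : 0 < SwL := by
    rw [hSwL]
    exact add_pos (mul_pos (pow_pos hBLpos 2) hN0) (mul_pos hlam0 hBLpos)
  have hsH : 0 < SwH := by
    rw [hSwH]
    exact add_pos (mul_pos (pow_pos hBHpos 2) hN0) (mul_pos hlam0 hBHpos)
  have haL : 0 < SL * BL ^ 2 := mul_pos (by linarith) (pow_pos hBLpos 2)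
  have haH : 0 < SH * BH ^ 2 := mul_pos hSH (pow_pos hBHpos 2)
  have hγLpos : 0 < γL := by rw [hγL]; exact div_pos haL hsL
  have hγHpos : 0 < γH := by rw [hγH]; exact div_pos haH hsH
  -- weight identities
  have hwLX : wL * (SwL * (SL * BL ^ 2 * M + SwL)) = 2 * M * (SL * BL ^ 2) ^ 2 := by
    have h1γ : (0:ℝ) < 1 + M * γL := by
      have : (0:ℝ) ≤ (M:ℝ) * γL := mul_nonneg hM0.le hγLpos.le
      linarith
    have hw1 : wL * (1 + M * γL) = 2 * M * γL ^ 2 := by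
      rw [hwL]; field_simp
    have h2 : γL * SwL = SL * BL ^ 2 := by rw [hγL]; field_simp
    linear_combination (SwL^2) * hw1 +
      (2 * (M:ℝ) * (SL * BL ^ 2 + γL * SwL) - wL * M * SwL) * h2
  have hwHX : wH * (SwH * (SH * BH ^ 2 * M + SwH)) = 2 * M * (SH * BH ^ 2) ^ 2 := by
    have h1γ : (0:ℝ) < 1 + M * γH := by
      have : (0:ℝ) ≤ (M:ℝ) * γH := mul_nonneg hM0.le hγHpos.le
      linarith
    have hw1 : wH * (1 + M * γH) = 2 * M * γH ^ 2 := by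
      rw [hwH]; field_simp
    have h2 : γH * SwH = SH * BH ^ 2 := by rw [hγH]; field_simp
    linear_combination (SwH^2) * hw1 +
      (2 * (M:ℝ) * (SH * BH ^ 2 + γH * SwH) - wH * M * SwH) * h2
  -- geometry
  have hgeo : (M : ℝ) * (∑ m, g i m * g j m) = (∑ m, g i m) * (∑ m, g j m) + M * G i j :=
    my_geo hMne (g i) (g j) (G i j) (by rw [hG i j, hP])
  -- unit modulus of steering vector
  have hunit : ∀ (f : ℝ) (m : Fin M), star (v f m) * v f m = 1 := by
    intro f m
    rw [hv f m, Complex.star_def, ← Complex.exp_conj, ← Complex.exp_add]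
    rw [show (starRingEnd ℂ) (-(2 * (π:ℂ) * Complex.I * (f:ℂ) * ((τ m : ℝ):ℂ)))
        + (-(2 * (π:ℂ) * Complex.I * (f:ℂ) * ((τ m : ℝ):ℂ))) = 0 by
      simp only [map_neg, _root_.map_mul, Complex.conj_I, Complex.conj_ofReal, map_ofNat]
      ring]
    exact Complex.exp_zero
  -- the piecewise real integrand
  set cL : ℝ := 4 * π ^ 2 * wL * G i j with hcL
  set cH : ℝ := 4 * π ^ 2 * wH * G i j with hcH
  set Fr : ℝ → ℝ := fun f => (if |f| ≤ fL then cL else cH) * f ^ 2 with hFr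
  -- pointwise identification of the integrand
  have key : Set.EqOn (fun f => Matrix.trace ((S f)⁻¹ * S' i f * (S f)⁻¹ * S' j f))
      (fun f => ((Fr f : ℝ) : ℂ)) (Set.uIcc (-fH) fH) := by
    intro f hf
    rw [Set.uIcc_of_le (by linarith)] at hf
    have hfH : |f| ≤ fH := abs_le.mpr ⟨hf.1, hf.2⟩
    by_cases hcase : |f| ≤ fL
    · simp only
      rw [hSlow f hcase, hS'low i f hcase, hS'low j f hcase, hD i, hD j]
      rw [band_value (v f) (hunit f) (g i) (g j) (SL * BL ^ 2) SwL wL (G i j) f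
        (2 * π * Complex.I * f * ((SL:ℂ) * (BL:ℂ) ^ 2)) (by push_cast; ring)
        hsL haL hgeo hwLX]
      rw [hFr]; simp only [if_pos hcase]; rw [hcL]
    · push_neg at hcase
      simp only
      rw [hShigh f hcase hfH, hS'high i f hcase hfH, hS'high j f hcase hfH, hD i, hD j]
      rw [band_value (v f) (hunit f) (g i) (g j) (SH * BH ^ 2) SwH wH (G i j) f
        (2 * π * Complex.I * f * ((SH:ℂ) * (BH:ℂ) ^ 2)) (by push_cast; ring)
        hsH haH hgeo hwHX]
      rw [hFr]; simp only [if_neg (not_le.mpr hcase)]; rw [hcH]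
  rw [intervalIntegral.integral_congr key, intervalIntegral.integral_ofReal]
  -- integrability of the pieces
  have hne : ∀ᵐ x : ℝ, x ≠ -fL := by
    have h1 : (volume : Measure ℝ) {(-fL)} = 0 := measure_singleton _
    filter_upwards [MeasureTheory.compl_mem_ae_iff.mpr h1] with x hx
    simpa using hx
  have hae1 : ∀ᵐ x : ℝ, x ∈ Set.uIoc (-fH) (-fL) → Fr x = cH * x ^ 2 := by
    filter_upwards [hne] with x hx hmem
    rw [Set.uIoc_of_le (by linarith : -fH ≤ -fL)] at hmem
    have hlt : x < -fL := lt_of_le_of_ne hmem.2 hx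
    have hgt : ¬ (|x| ≤ fL) := by
      rw [not_le, abs_of_neg (show x < 0 by linarith)]
      linarith
    rw [hFr]
    simp only [if_neg hgt]
  have hae2 : ∀ᵐ x : ℝ, x ∈ Set.uIoc (-fL) fL → Fr x = cL * x ^ 2 := by
    refine Filter.Eventually.of_forall fun x hmem => ?_
    rw [Set.uIoc_of_le (by linarith : -fL ≤ fL)] at hmem
    have hle : |x| ≤ fL := abs_le.mpr ⟨hmem.1.le, hmem.2⟩
    rw [hFr]
    simp only [if_pos hle]
  have hae3 : ∀ᵐ x : ℝ, x ∈ Set.uIoc fL fH → Fr x = cH * x ^ 2 := by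
    refine Filter.Eventually.of_forall fun x hmem => ?_
    rw [Set.uIoc_of_le (by linarith : fL ≤ fH)] at hmem
    have hgt : ¬ (|x| ≤ fL) := by
      rw [not_le, abs_of_pos (show (0:ℝ) < x by linarith [hmem.1])]
      exact hmem.1
    rw [hFr]
    simp only [if_neg hgt]
  have hcont : ∀ cc a b : ℝ, IntervalIntegrable (fun x : ℝ => cc * x ^ 2) volume a b :=
    fun cc a b => (continuous_const.mul (continuous_pow 2)).intervalIntegrable a b
  have hres : ∀ a b cc : ℝ, (∀ᵐ x : ℝ, x ∈ Set.uIoc a b → Fr x = cc * x ^ 2) →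
      IntervalIntegrable Fr volume a b := by
    intro a b cc h
    refine (hcont cc a b).congr_ae ?_
    exact (MeasureTheory.ae_restrict_iff' measurableSet_uIoc).mpr
      (h.mono fun x hx hmem => (hx hmem).symm)
  have int1 : IntervalIntegrable Fr volume (-fH) (-fL) := hres _ _ cH hae1
  have int2 : IntervalIntegrable Fr volume (-fL) fL := hres _ _ cL hae2
  have int3 : IntervalIntegrable Fr volume fL fH := hres _ _ cH hae3
  have split : (∫ x in (-fH)..fH, Fr x)
      = (∫ x in (-fH)..(-fL), Fr x) + ((∫ x in (-fL)..fL, Fr x) + ∫ x in fL..fH, Fr x) := by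
    rw [intervalIntegral.integral_add_adjacent_intervals int2 int3,
      intervalIntegral.integral_add_adjacent_intervals int1 (int2.trans int3)]
  have hval : ∀ a b cc : ℝ, (∀ᵐ x : ℝ, x ∈ Set.uIoc a b → Fr x = cc * x ^ 2) →
      (∫ x in a..b, Fr x) = cc * ((b ^ 3 - a ^ 3) / 3) := by
    intro a b cc h
    rw [intervalIntegral.integral_congr_ae h, intervalIntegral.integral_const_mul, integral_pow]
    norm_num
  rw [split, hval _ _ _ hae1, hval _ _ _ hae2, hval _ _ _ hae3]
  rw [show (1/2 : ℂ) = ((1/2 : ℝ) : ℂ) by norm_num, ← Complex.ofReal_mul,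
    Complex.ofReal_inj]
  rw [hcL, hcH]
  ring
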